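/- Let Δ ≥ 1 be an integer, let S be a nonempty finite set with |S| ≤ Δ, and let y : S → [0,1]. Then min(1, Σ_{j∈S} y_j) ≥ 1 − Π_{j∈S}(1 − y_j) ≥ (1 − (1 − 1/Δ)^Δ) · min(1, Σ_{j∈S} y_j). -/

import Mathlib

/-- AM–GM for natural powers: `∏ f ≤ (∑ f / card)^card`. -/
lemma amgm_pow {ι : Type*} (s : Finset ι) (f : ι → ℝ) (hf : ∀ i ∈ s, 0 ≤ f i)
    (hs : s.Nonempty) :
    ∏ i ∈ s, f i ≤ ((∑ i ∈ s, f i) / s.card) ^ s.card := by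
  have hcard : (0 : ℝ) < s.card := by exact_mod_cast hs.card_pos
  have hw : ∀ i ∈ s, (0:ℝ) ≤ 1 / s.card := fun i _ => by positivity
  have hw' : ∑ _i ∈ s, (1 : ℝ) / s.card = 1 := by
    rw [Finset.sum_const, nsmul_eq_mul]
    field_simp
  have h := Real.geom_mean_le_arith_mean_weighted s (fun _ => 1 / s.card) f hw hw' hf
  have hprod : ∏ i ∈ s, f i ^ ((1:ℝ) / s.card) = (∏ i ∈ s, f i) ^ ((1:ℝ) / s.card) := by
    rw [← Real.finset_prod_rpow s f hf]
  rw [hprod] at h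
  have hsum : ∑ i ∈ s, (1 / (s.card:ℝ)) * f i = (∑ i ∈ s, f i) / s.card := by
    rw [← Finset.mul_sum]; ring
  rw [hsum] at h
  have hP : (0:ℝ) ≤ ∏ i ∈ s, f i := Finset.prod_nonneg hf
  calc ∏ i ∈ s, f i
      = ((∏ i ∈ s, f i) ^ ((1:ℝ) / s.card)) ^ (s.card : ℕ) := by
        rw [← Real.rpow_natCast ((∏ i ∈ s, f i) ^ ((1:ℝ)/s.card)) s.card,
          ← Real.rpow_mul hP]
        rw [one_div, inv_mul_cancel₀ (ne_of_gt hcard), Real.rpow_one]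
    _ ≤ ((∑ i ∈ s, f i) / s.card) ^ (s.card : ℕ) :=
        pow_le_pow_left₀ (Real.rpow_nonneg hP _) h _

/-- Weierstrass product inequality: `1 - ∑ y ≤ ∏ (1 - y)` for `y ∈ [0,1]`. -/
lemma weierstrass {ι : Type*} (s : Finset ι) (y : ι → ℝ) (h0 : ∀ i ∈ s, 0 ≤ y i)
    (h1 : ∀ i ∈ s, y i ≤ 1) : 1 - ∑ i ∈ s, y i ≤ ∏ i ∈ s, (1 - y i) := by
  classical
  induction s using Finset.induction with
  | empty => simp
  | @insert a s ha ih =>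
    have h0' : ∀ i ∈ s, 0 ≤ y i := fun i hi => h0 i (Finset.mem_insert_of_mem hi)
    have h1' : ∀ i ∈ s, y i ≤ 1 := fun i hi => h1 i (Finset.mem_insert_of_mem hi)
    have ih' := ih h0' h1'
    rw [Finset.sum_insert ha, Finset.prod_insert ha]
    have hP1 : ∏ i ∈ s, (1 - y i) ≤ 1 := by
      apply Finset.prod_le_one (fun i hi => by linarith [h1' i hi])
        (fun i hi => by linarith [h0' i hi])
    have ha0 := h0 a (Finset.mem_insert_self a s)
    have ha1 := h1 a (Finset.mem_insert_self a s)
    nlinarith [Finset.prod_nonneg (fun i (hi : i ∈ s) => by linarith [h1' i hi] :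
      ∀ i ∈ s, (0:ℝ) ≤ 1 - y i)]

/-- The padded AM–GM bound: `∏_{S}(1-y_j) ≤ (1 - s/Δ)^Δ` where `s = ∑ y`. -/
lemma padded_bound {J : Type*} (Δ : ℕ) (hΔ : 1 ≤ Δ) (S : Finset J)
    (hSΔ : S.card ≤ Δ) (y : J → ℝ) (hy0 : ∀ j ∈ S, 0 ≤ y j) (hy1 : ∀ j ∈ S, y j ≤ 1) :
    ∏ j ∈ S, (1 - y j) ≤ (1 - (∑ j ∈ S, y j) / Δ) ^ Δ := by
  classical
  set z : J ⊕ ℕ → ℝ := Sum.elim (fun j => 1 - y j) (fun _ => 1) with hz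
  set T₁ : Finset (J ⊕ ℕ) := S.map ⟨Sum.inl, Sum.inl_injective⟩
  set T₂ : Finset (J ⊕ ℕ) := (Finset.range (Δ - S.card)).map ⟨Sum.inr, Sum.inr_injective⟩
  have hdisj : Disjoint T₁ T₂ := by
    simp only [T₁, T₂, Finset.disjoint_left]
    intro x hx1 hx2
    simp only [Finset.mem_map, Function.Embedding.coeFn_mk] at hx1 hx2
    obtain ⟨a, -, rfl⟩ := hx1
    obtain ⟨b, -, hb⟩ := hx2
    cases hb
  set T : Finset (J ⊕ ℕ) := T₁.disjUnion T₂ hdisj with hT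
  have hcardT : T.card = Δ := by
    rw [hT, Finset.card_disjUnion, Finset.card_map, Finset.card_map, Finset.card_range]
    omega
  have hTne : T.Nonempty := by
    rw [← Finset.card_pos, hcardT]; omega
  have hz0 : ∀ i ∈ T, 0 ≤ z i := by
    intro i hi
    rw [hT, Finset.mem_disjUnion] at hi
    rcases hi with hi | hi
    · simp only [T₁, Finset.mem_map, Function.Embedding.coeFn_mk] at hi
      obtain ⟨a, ha, rfl⟩ := hi
      simpa [z] using by linarith [hy1 a ha]
    · simp only [T₂, Finset.mem_map, Function.Embedding.coeFn_mk] at hi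
      obtain ⟨b, -, rfl⟩ := hi
      simp [z]
  have hprodT : ∏ i ∈ T, z i = ∏ j ∈ S, (1 - y j) := by
    rw [hT, Finset.prod_disjUnion]
    simp [T₁, T₂, Finset.prod_map, z]
  have hsumT : ∑ i ∈ T, z i = Δ - ∑ j ∈ S, y j := by
    rw [hT, Finset.sum_disjUnion]
    simp only [T₁, T₂, Finset.sum_map, Function.Embedding.coeFn_mk, z, Sum.elim_inl,
      Sum.elim_inr, Finset.sum_sub_distrib, Finset.sum_const, Finset.card_range,
      nsmul_eq_mul, mul_one, Finset.sum_const]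
    have : ((Δ - S.card : ℕ) : ℝ) = (Δ : ℝ) - S.card := by
      rw [Nat.cast_sub hSΔ]
    simp [this]
  have hA := amgm_pow T z hz0 hTne
  rw [hprodT, hsumT, hcardT] at hA
  have hΔ0 : (0:ℝ) < Δ := by exact_mod_cast hΔ
  have hdiv : ((Δ : ℝ) - ∑ j ∈ S, y j) / Δ = 1 - (∑ j ∈ S, y j) / Δ := by
    field_simp
  rwa [hdiv] at hA

/-- The Ageev–Sviridenko pointwise inequality: for `y : S → [0,1]` with `|S| ≤ Δ`,
`min(1, Σ y_j) ≥ 1 − Π(1 − y_j) ≥ (1 − (1 − 1/Δ)^Δ)·min(1, Σ y_j)`. -/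
theorem stmt6 {J : Type*} (Δ : ℕ) (hΔ : 1 ≤ Δ) (S : Finset J) (hS : S.Nonempty)
    (hSΔ : S.card ≤ Δ) (y : J → ℝ) (hy0 : ∀ j ∈ S, 0 ≤ y j) (hy1 : ∀ j ∈ S, y j ≤ 1) :
    1 - ∏ j ∈ S, (1 - y j) ≤ min 1 (∑ j ∈ S, y j) ∧
      (1 - (1 - 1 / (Δ : ℝ)) ^ Δ) * min 1 (∑ j ∈ S, y j) ≤ 1 - ∏ j ∈ S, (1 - y j) := by
  have hΔ0 : (0:ℝ) < Δ := by exact_mod_cast hΔ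
  set s := ∑ j ∈ S, y j with hs
  set P := ∏ j ∈ S, (1 - y j) with hP
  have hs0 : 0 ≤ s := Finset.sum_nonneg hy0
  have hsk : s ≤ S.card := by
    calc s ≤ ∑ _j ∈ S, (1:ℝ) := Finset.sum_le_sum hy1
    _ = S.card := by simp
  have hsΔ : s ≤ Δ := le_trans hsk (by exact_mod_cast hSΔ)
  have hP0 : 0 ≤ P := Finset.prod_nonneg (fun i hi => by linarith [hy1 i hi])
  have hW : 1 - s ≤ P := weierstrass S y hy0 hy1
  have hpad : P ≤ (1 - s / Δ) ^ Δ := padded_bound Δ hΔ S hSΔ y hy0 hy1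
  have hbase0 : (0:ℝ) ≤ 1 - s / Δ := by
    rw [sub_nonneg, div_le_one hΔ0]; exact hsΔ
  constructor
  · rcases le_total 1 s with h | h
    · rw [min_eq_left h]; linarith
    · rw [min_eq_right h]; linarith
  · rcases le_total 1 s with h | h
    · -- s ≥ 1: P ≤ (1-s/Δ)^Δ ≤ (1-1/Δ)^Δ
      rw [min_eq_left h, mul_one]
      have h2 : (1 - s / Δ) ^ Δ ≤ (1 - 1 / (Δ:ℝ)) ^ Δ := by
        apply pow_le_pow_left₀ hbase0
        have : 1 / (Δ:ℝ) ≤ s / Δ := by gcongr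
        linarith
      linarith
    · -- s ≤ 1: convexity
      rw [min_eq_right h]
      have hconv := (convexOn_pow (𝕜 := ℝ) Δ).2 (Set.mem_Ici.mpr zero_le_one)
        (Set.mem_Ici.mpr (by
          rw [sub_nonneg]
          exact div_le_one_of_le₀ (by exact_mod_cast hΔ) hΔ0.le : (0:ℝ) ≤ 1 - 1/Δ))
        (by linarith : (0:ℝ) ≤ 1 - s) hs0 (by ring)
      simp only [smul_eq_mul] at hconv
      have hkey : (1 - s) * 1 + s * (1 - 1/(Δ:ℝ)) = 1 - s / Δ := by ring
      rw [hkey, one_pow] at hconv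
      have : P ≤ (1 - s) + s * (1 - 1/(Δ:ℝ))^Δ := le_trans hpad (by linarith)
      nlinarith
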